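/- Let ζ, η ∈ {+1,-1}, let Z, Y, W ∈ ℝ, and suppose (ζ, Z) ≠ (+1, mQ) for a fixed real mQ. Then the equation max[mQ - Z + W + S(η), W + S(-ζη), A + 2mQ + S(-ζ)] = max[mQ - Z + W + S(-η), W + S(ζη), A + 2mQ + S(ζ)] (with S(+1)=0, S(-1)=-∞ and conventions max with -∞ terms dropping them) holds if and only if W = A + 2mQ - max(mQ - Z, 0) and η = ζ if Z < mQ, η = -1 if Z ≥ mQ. -/

import Mathlib

/-- Sign-encoding function `S : {+1,-1} → {0,-∞}` (values in the extended reals). -/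
noncomputable def S (ω : ℝ) : EReal := if ω = 1 then 0 else ⊥

@[simp, norm_cast]
lemma ereal_coe_max (a b : ℝ) : ((max a b : ℝ) : EReal) = max (a : EReal) (b : EReal) :=
  EReal.coe_strictMono.monotone.map_max

lemma stmt2_real1 (A mQ Z W : ℝ) (hZ : Z ≠ mQ) :
    mQ - Z + W = max W (A + 2 * mQ) ↔ W = A + 2 * mQ - max (mQ - Z) 0 ∧ Z < mQ := by
  rcases lt_trichotomy Z mQ with h | h | h
  · rw [max_eq_left (by linarith : (0:ℝ) ≤ mQ - Z)]
    constructor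
    · intro he
      rcases max_cases W (A + 2 * mQ) with ⟨e, le⟩ | ⟨e, le⟩ <;> rw [e] at he <;>
        exact ⟨by linarith, h⟩
    · rintro ⟨rfl, -⟩
      rw [max_eq_right (by linarith)]; ring
  · exact absurd h hZ
  · rw [max_eq_right (by linarith : mQ - Z ≤ (0:ℝ))]
    constructor
    · intro he
      have := le_max_left W (A + 2 * mQ); linarith
    · rintro ⟨-, hlt⟩; linarith

lemma stmt2_real2 (A mQ Z W : ℝ) (hZ : Z ≠ mQ) :
    W = max (mQ - Z + W) (A + 2 * mQ) ↔ W = A + 2 * mQ - max (mQ - Z) 0 ∧ ¬ Z < mQ := by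
  rcases lt_trichotomy Z mQ with h | h | h
  · constructor
    · intro he
      have := le_max_left (mQ - Z + W) (A + 2 * mQ); linarith
    · rintro ⟨-, hlt⟩; exact absurd h hlt
  · exact absurd h hZ
  · rw [max_eq_right (by linarith : mQ - Z ≤ (0:ℝ))]
    constructor
    · intro he
      rcases max_cases (mQ - Z + W) (A + 2 * mQ) with ⟨e, le⟩ | ⟨e, le⟩ <;> rw [e] at he <;>
        exact ⟨by linarith, not_lt.2 h.le⟩
    · rintro ⟨rfl, -⟩
      rw [max_eq_right (by linarith)]; ring

lemma stmt2_real3 (A mQ Z W : ℝ) :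
    A + 2 * mQ = max (mQ - Z + W) W ↔ W = A + 2 * mQ - max (mQ - Z) 0 := by
  rcases le_total (mQ - Z) 0 with h | h
  · rw [max_eq_right h, max_eq_right (by linarith : mQ - Z + W ≤ W)]
    constructor <;> intro he <;> linarith
  · rw [max_eq_left h, max_eq_left (by linarith : W ≤ mQ - Z + W)]
    constructor <;> intro he <;> linarith

theorem stmt2 (A mQ : ℝ) (ζ η : ℝ) (hζ : ζ = 1 ∨ ζ = -1) (hη : η = 1 ∨ η = -1)
    (Z W : ℝ) (hne : ¬ (ζ = 1 ∧ Z = mQ)) :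
    (max (((mQ - Z + W : ℝ) : EReal) + S η)
        (max (((W : ℝ) : EReal) + S (-(ζ * η))) (((A + 2 * mQ : ℝ) : EReal) + S (-ζ)))
      = max (((mQ - Z + W : ℝ) : EReal) + S (-η))
        (max (((W : ℝ) : EReal) + S (ζ * η)) (((A + 2 * mQ : ℝ) : EReal) + S ζ)))
    ↔ (W = A + 2 * mQ - max (mQ - Z) 0 ∧ η = if Z < mQ then ζ else -1) := by
  rcases hζ with rfl | rfl <;> rcases hη with rfl | rfl <;>
    simp only [S] <;> norm_num [EReal.add_bot, max_eq_right bot_le, max_eq_left bot_le]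
  · have hZ : Z ≠ mQ := fun h => hne ⟨rfl, h⟩
    have hif : ((1:ℝ) = if Z < mQ then (1:ℝ) else -1) ↔ Z < mQ := by
      split_ifs with h <;> norm_num [h]
    exact_mod_cast stmt2_real1 A mQ Z W hZ
  · have hZ : Z ≠ mQ := fun h => hne ⟨rfl, h⟩
    have hif : ((-1:ℝ) = if Z < mQ then (1:ℝ) else -1) ↔ ¬ Z < mQ := by
      split_ifs with h <;> norm_num [h]
    rw [← not_lt]
    exact_mod_cast stmt2_real2 A mQ Z W hZ
  · exact_mod_cast stmt2_real3 A mQ Z W
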